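/- Under the interference-alignment hypotheses, set t = ⌈r²/l⌉ and suppose t = r and r < k. Then every subset F ⊆ {1,…,k} with |F| = r satisfies Σ_{i∈F} rowSpace(S_i) = 𝔽^l, while for every m < r, every subset F ⊆ {1,…,k} with |F| = m satisfies dim(Σ_{i∈F} rowSpace(S_i)) = m·(l/r) < l. (That is, the standard-partition size λ equals r.) -/
import Mathlib

open Submodule Set Module Matrix

theorem stmt_13 {𝔽 : Type*} [Field 𝔽] (k r l : ℕ)
    (hk : 0 < k) (hr : 2 ≤ r) (hl : 0 < l) (hrl : r ∣ l)
    (S : Fin k → Matrix (Fin (l / r)) (Fin l) 𝔽)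
    (C : Fin r → Fin k → Matrix (Fin l) (Fin l) 𝔽)
    (hCinv : ∀ u j, IsUnit (C u j))
    (hC1 : ∀ j, C ⟨0, by omega⟩ j = 1)
    (hIA1 : ∀ (i j : Fin k), j ≠ i → ∀ u : Fin r,
      Submodule.span 𝔽 (Set.range (S i * C u j)) = Submodule.span 𝔽 (Set.range (S i)))
    (hIA2 : ∀ i : Fin k, iSupIndep
      fun u : Fin r => Submodule.span 𝔽 (Set.range (S i * C u i)))
    (hIA3 : ∀ i : Fin k,
      (⨆ u : Fin r, Submodule.span 𝔽 (Set.range (S i * C u i))) = ⊤)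
    (t : ℕ) (ht : t = r ^ 2 ⌈/⌉ l) (htr : t = r) (hrk : r < k) :
    (∀ F : Finset (Fin k), F.card = r →
      (⨆ i ∈ F, Submodule.span 𝔽 (Set.range (S i))) = ⊤) ∧
    (∀ m : ℕ, m < r → ∀ F : Finset (Fin k), F.card = m →
      Module.finrank 𝔽 ↥(⨆ i ∈ F, Submodule.span 𝔽 (Set.range (S i))) = m * (l / r) ∧
      m * (l / r) < l) := by
  classical
  -- Step 1: l = r
  obtain ⟨c, hc⟩ := hrl
  have hcpos : 0 < c := by
    rcases Nat.eq_zero_or_pos c with h | h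
    · simp [h] at hc; omega
    · exact h
  have hlr : l = r := by
    have h0 : r ^ 2 ⌈/⌉ l = r := by rw [← ht, htr]
    have h1 : (r ^ 2 + l - 1) / l = r := by
      rw [← Nat.ceilDiv_eq_add_pred_div]; exact h0
    have h2 : r * l ≤ r ^ 2 + l - 1 := by
      rw [← Nat.le_div_iff_mul_le hl]; omega
    have h3 : r * l < r ^ 2 + l :=
      lt_of_le_of_lt h2 (Nat.sub_lt (by positivity) one_pos)
    have hc1 : c = 1 := by
      by_contra hcne
      have hc2 : 2 ≤ c := by omega
      rw [hc] at h3
      nlinarith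
    rw [hc, hc1, mul_one]
  have hβ : l / r = 1 := by rw [hlr, Nat.div_self (by omega)]
  have hβpos : 0 < l / r := by omega
  set i0 : Fin (l / r) := ⟨0, hβpos⟩ with hi0
  set w : Fin k → (Fin l → 𝔽) := fun i => S i i0 with hw
  -- ranges are singletons
  have hrange : ∀ (M : Matrix (Fin (l / r)) (Fin l) 𝔽), Set.range M = {M i0} := by
    intro M
    ext y
    constructor
    · rintro ⟨x, rfl⟩
      have hx : x = i0 := by
        have hx1 : (x : ℕ) < 1 := lt_of_lt_of_le x.isLt (le_of_eq hβ)
        have hx0 : (x : ℕ) = 0 := by omega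
        exact Fin.ext hx0
      rw [hx]; rfl
    · rintro rfl; exact ⟨i0, rfl⟩
  have hrow : ∀ (i : Fin k) (u : Fin r) (j : Fin k),
      (S i * C u j) i0 = (w i) ᵥ* (C u j) := by
    intro i u j
    funext z
    simp [Matrix.mul_apply, Matrix.vecMul, dotProduct, hw]
  have hspan : ∀ i : Fin k, Submodule.span 𝔽 (Set.range (S i)) = Submodule.span 𝔽 {w i} := by
    intro i; rw [hrange]
  have hspanC : ∀ (i : Fin k) (u : Fin r) (j : Fin k),
      Submodule.span 𝔽 (Set.range (S i * C u j)) = Submodule.span 𝔽 {(w i) ᵥ* (C u j)} := by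
    intro i u j; rw [hrange, hrow]
  -- key lemma
  have key : ∀ (G : Finset (Fin k)) (a : Fin k), a ∉ G → G.card < r →
      w a ∉ Submodule.span 𝔽 (w '' ↑G) := by
    intro G a haG hGcard hmem
    set W : Submodule 𝔽 (Fin l → 𝔽) := Submodule.span 𝔽 (w '' ↑G) with hW
    have hgen : ∀ u : Fin r, ∀ j ∈ G, (w j) ᵥ* (C u a) ∈ W := by
      intro u j hj
      have hja : a ≠ j := fun h => haG (h ▸ hj)
      have h1 : Submodule.span 𝔽 {(w j) ᵥ* (C u a)} = Submodule.span 𝔽 {w j} := by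
        rw [← hspanC j u a, hIA1 j a hja u, hspan]
      have h2 : (w j) ᵥ* (C u a) ∈ Submodule.span 𝔽 {w j} := by
        rw [← h1]; exact Submodule.mem_span_singleton_self _
      have h3 : Submodule.span 𝔽 {w j} ≤ W :=
        Submodule.span_mono (Set.singleton_subset_iff.mpr ⟨j, hj, rfl⟩)
      exact h3 h2
    have hWinv : ∀ u : Fin r, ∀ x ∈ W, x ᵥ* (C u a) ∈ W := by
      intro u x hx
      have hmap : Submodule.map (Matrix.vecMulLinear (C u a)) W ≤ W := by
        rw [hW, Submodule.map_span, Submodule.span_le]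
        rintro y ⟨z, ⟨j, hj, rfl⟩, rfl⟩
        exact hgen u j hj
      exact hmap ⟨x, hx, rfl⟩
    have htop : (⊤ : Submodule 𝔽 (Fin l → 𝔽)) ≤ W := by
      rw [← hIA3 a]
      apply iSup_le
      intro u
      rw [hspanC a u a, Submodule.span_le, Set.singleton_subset_iff]
      exact hWinv u _ hmem
    have hfr1 : Module.finrank 𝔽 W ≤ G.card := by
      have heq : W = Submodule.span 𝔽 ((G.image w : Finset (Fin l → 𝔽)) : Set (Fin l → 𝔽)) := by
        rw [hW, Finset.coe_image]
      calc Module.finrank 𝔽 W ≤ (G.image w).card := by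
            rw [heq]; exact finrank_span_finset_le_card _
        _ ≤ G.card := Finset.card_image_le
    have hWtop : W = ⊤ := le_antisymm le_top htop
    have hfr2 : Module.finrank 𝔽 W = l := by
      rw [hWtop, finrank_top, Module.finrank_fin_fun]
    omega
  -- linear independence of any ≤ r of the row vectors
  have hind : ∀ F : Finset (Fin k), F.card ≤ r →
      LinearIndependent 𝔽 (fun i : ↥F => w ↑i) := by
    intro F hF
    rw [linearIndependent_iff_notMem_span]
    intro i hi
    have himg : (fun j : ↥F => w ↑j) '' (Set.univ \ {i}) = w '' ↑(F.erase ↑i) := by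
      ext y
      constructor
      · rintro ⟨⟨j, hj⟩, ⟨-, hne⟩, rfl⟩
        exact ⟨j, by
          simp only [Finset.coe_erase, Set.mem_diff, Set.mem_singleton_iff]
          exact ⟨hj, fun h => hne (Subtype.ext h)⟩, rfl⟩
      · rintro ⟨j, hj, rfl⟩
        simp only [Finset.coe_erase, Set.mem_diff, Set.mem_singleton_iff] at hj
        exact ⟨⟨j, hj.1⟩, ⟨Set.mem_univ _, fun h => hj.2 (congrArg Subtype.val h)⟩, rfl⟩
    rw [himg] at hi
    exact key (F.erase ↑i) ↑i (Finset.notMem_erase _ _)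
      (by have := Finset.card_erase_of_mem i.2; omega) hi
  -- dimension of partial sums
  have hdim : ∀ F : Finset (Fin k), F.card ≤ r →
      Module.finrank 𝔽 ↥(⨆ i ∈ F, Submodule.span 𝔽 (Set.range (S i))) = F.card := by
    intro F hF
    have hsup : (⨆ i ∈ F, Submodule.span 𝔽 (Set.range (S i)))
        = Submodule.span 𝔽 (w '' ↑F) := by
      calc (⨆ i ∈ F, Submodule.span 𝔽 (Set.range (S i)))
          = ⨆ i ∈ F, Submodule.span 𝔽 ({w i} : Set (Fin l → 𝔽)) := by
            apply iSup_congr; intro i; apply iSup_congr; intro _; exact hspan i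
        _ = Submodule.span 𝔽 (⋃ i ∈ F, ({w i} : Set (Fin l → 𝔽))) := by
            rw [Submodule.span_iUnion₂]
        _ = Submodule.span 𝔽 (w '' ↑F) := by
            congr 1; ext y; simp [eq_comm]
    have hran : Set.range (fun i : ↥F => w ↑i) = w '' ↑F := by
      ext y
      constructor
      · rintro ⟨⟨j, hj⟩, rfl⟩; exact ⟨j, hj, rfl⟩
      · rintro ⟨j, hj, rfl⟩; exact ⟨⟨j, hj⟩, rfl⟩
    have := finrank_span_eq_card (hind F hF)
    rw [hran] at this
    rw [hsup, this, Fintype.card_coe]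
  constructor
  · intro F hF
    apply Submodule.eq_top_of_finrank_eq
    rw [hdim F (le_of_eq hF), hF, Module.finrank_fin_fun, hlr]
  · intro m hm F hF
    refine ⟨?_, ?_⟩
    · rw [hdim F (by omega), hF, hβ, mul_one]
    · rw [hβ, mul_one]; omega
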